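/- Let V₃ be the digraph on vertices {1,2,3} with arcs (1,2) and (3,2) (the orientation of the path on three vertices whose middle vertex is a sink), and let N₄ be the digraph on vertices {1,2,3,4} with arcs (2,1), (2,3) and (4,3) (the anti-directed path on four vertices). Let D be any finite digraph, and let D' be obtained from D by adding, for each vertex v of D, a disjoint new copy N₄^v of N₄ together with all arcs (v,u) for u a vertex of N₄^v. Then D admits a V₃-free 2-coloring if and only if D' admits an N₄-free 2-coloring. Moreover, D' is acyclic if and only if D is acyclic. -/

import Mathlib

/-- A simple digraph on vertex type `V`: no loops and no anti-parallel arcs. -/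
structure Digraph' (V : Type*) : Type _ where
  Adj : V → V → Prop
  loopless : ∀ v, ¬ Adj v v
  asymm : ∀ u v, Adj u v → ¬ Adj v u

/-- An induced copy of the digraph `F` in the digraph `D`, given by the embedding `φ`. -/
def IsInducedCopy {α β : Type*} (F : Digraph' α) (D : Digraph' β) (φ : α → β) : Prop :=
  Function.Injective φ ∧ ∀ u v : α, D.Adj (φ u) (φ v) ↔ F.Adj u v

/-- The image of `φ` is monochromatic under the coloring `c`. -/
def Monochromatic {α β : Type*} {k : ℕ} (c : β → Fin k) (φ : α → β) : Prop :=
  ∃ i : Fin k, ∀ u : α, c (φ u) = i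

/-- The coloring `c` of `D` is `F`-free: no induced copy of `F` in `D` is monochromatic. -/
def IsFFreeColoring {α β : Type*} (F : Digraph' α) (D : Digraph' β) {k : ℕ}
    (c : β → Fin k) : Prop :=
  ∀ φ : α → β, IsInducedCopy F D φ → ¬ Monochromatic c φ

/-- A digraph is acyclic if it contains no directed cycle. -/
def Digraph'.Acyclic {β : Type*} (D : Digraph' β) : Prop :=
  ∀ v : β, ¬ Relation.TransGen D.Adj v v

/-- The underlying simple graph of a digraph. -/
def Digraph'.underlying {V : Type*} (D : Digraph' V) : SimpleGraph V where
  Adj u v := D.Adj u v ∨ D.Adj v u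
  symm := ⟨by intro _ _ h; exact Or.symm h⟩
  loopless := ⟨by intro v h; exact h.elim (D.loopless v) (D.loopless v)⟩

/-- The orientation of the path on three vertices `0, 1, 2` whose middle vertex `1` is a
sink: arcs `(0, 1)` and `(2, 1)` (vertices `1,2,3` of the statement are `0,1,2` here). -/
def V3sink : Digraph' (Fin 3) where
  Adj u v := (u = 0 ∧ v = 1) ∨ (u = 2 ∧ v = 1)
  loopless := by decide
  asymm := by decide

/-- The anti-directed path on four vertices `0, 1, 2, 3` with arcs `(1, 0)`, `(1, 2)` and
`(3, 2)` (vertices `1,2,3,4` of the statement are `0,1,2,3` here). -/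
def N4 : Digraph' (Fin 4) where
  Adj u v := (u = 1 ∧ v = 0) ∨ (u = 1 ∧ v = 2) ∨ (u = 3 ∧ v = 2)
  loopless := by decide
  asymm := by decide

/-- The arc relation of the digraph `D'` obtained from `D` by adding, for each vertex `v` of
`D`, a disjoint copy of `O` together with all arcs `(v, u)` for `u` a vertex of that copy. -/
def attachPlusRel {V ω : Type*} (D : Digraph' V) (O : Digraph' ω) :
    (V ⊕ (V × ω)) → (V ⊕ (V × ω)) → Prop
  | Sum.inl u, Sum.inl v => D.Adj u v
  | Sum.inl v, Sum.inr (w, _) => v = w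
  | Sum.inr _, Sum.inl _ => False
  | Sum.inr (v, u), Sum.inr (v', u') => v = v' ∧ O.Adj u u'

open Sum

lemma N4_no_comp : ∀ a b c : Fin 4, N4.Adj a b → N4.Adj b c → False := by
  simp only [N4]; decide

lemma N4_acyclic : ∀ v, ¬ Relation.TransGen N4.Adj v v := by
  intro v hv
  have step : ∀ x y : Fin 4, Relation.TransGen N4.Adj x y → N4.Adj x y := by
    intro x y h
    induction h with
    | single h => exact h
    | tail _ h2 ih => exact (N4_no_comp _ _ _ ih h2).elim
  exact N4.loopless v (step v v hv)

def projP {V : Type*} (D : Digraph' V) : (V ⊕ (V × Fin 4)) → (V ⊕ (V × Fin 4)) → Prop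
  | inl v, inl w => Relation.TransGen D.Adj v w
  | inl _, inr _ => True
  | inr _, inl _ => False
  | inr p, inr q => p.1 = q.1 ∧ Relation.TransGen N4.Adj p.2 q.2

lemma trans_proj {V : Type*} (D : Digraph' V) (D' : Digraph' (V ⊕ (V × Fin 4)))
    (hD' : ∀ x y, D'.Adj x y ↔ attachPlusRel D N4 x y) :
    ∀ x y, Relation.TransGen D'.Adj x y → projP D x y := by
  intro x y h
  induction h with
  | single h =>
    rename_i b
    rw [hD'] at h
    rcases x with v | ⟨v, u⟩ <;> rcases b with w | ⟨w, u'⟩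
    · exact Relation.TransGen.single h
    · trivial
    · exact h
    · exact ⟨h.1, Relation.TransGen.single h.2⟩
  | tail h1 h2 ih =>
    rename_i b c
    rw [hD'] at h2
    rcases x with v | ⟨v, u⟩ <;> rcases b with w | ⟨w, u'⟩ <;> rcases c with z | ⟨z, u''⟩
    · exact ih.tail h2
    · trivial
    · exact h2.elim
    · trivial
    · exact ih.elim
    · exact ih.elim
    · exact h2.elim
    · exact ⟨ih.1.trans h2.1, ih.2.tail h2.2⟩


lemma forward {V : Type*} (D : Digraph' V) (D' : Digraph' (V ⊕ (V × Fin 4)))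
    (hD' : ∀ x y, D'.Adj x y ↔ attachPlusRel D N4 x y)
    (c : V → Fin 2) (hc : IsFFreeColoring V3sink D c) :
    IsFFreeColoring N4 D'
      (fun x => match x with | inl v => c v | inr (_, u) => if u = 0 then 0 else 1) := by
  rintro φ ⟨hinj, hiso⟩ ⟨i, hmono⟩
  have key : ∀ (a b : Fin 4) (x y : V), φ a = inl x → φ b = inl y →
      (D.Adj x y ↔ N4.Adj a b) := by
    intro a b x y hx hy
    have h := hiso a b
    rw [hx, hy, hD'] at h
    exact h
  have hbc : D'.Adj (φ 1) (φ 2) := (hiso 1 2).mpr (Or.inr (Or.inl ⟨rfl, rfl⟩))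
  have hdc : D'.Adj (φ 3) (φ 2) := (hiso 3 2).mpr (Or.inr (Or.inr ⟨rfl, rfl⟩))
  have hba : D'.Adj (φ 1) (φ 0) := (hiso 1 0).mpr (Or.inl ⟨rfl, rfl⟩)
  have hbd : ¬ D'.Adj (φ 1) (φ 3) := fun h => by
    have := (hiso 1 3).mp h; simp [N4] at this
  have hdb : ¬ D'.Adj (φ 3) (φ 1) := fun h => by
    have := (hiso 3 1).mp h; simp [N4] at this
  rw [hD'] at hbc hdc hba
  rcases h2 : φ 2 with z | ⟨w, u2⟩ <;> rw [h2] at hbc hdc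
  · -- φ 2 = inl z : everything relevant is in D
    rcases h1 : φ 1 with b' | p <;> rw [h1] at hbc
    swap
    · exact hbc.elim
    rcases h3 : φ 3 with d' | p <;> rw [h3] at hdc
    swap
    · exact hdc.elim
    have hbz : D.Adj b' z := hbc
    have hdz : D.Adj d' z := hdc
    have nzb : ¬ D.Adj z b' := fun h => by
      have := (key 2 1 z b' h2 h1).mp h; simp [N4] at this
    have nbd : ¬ D.Adj b' d' := fun h => by
      have := (key 1 3 b' d' h1 h3).mp h; simp [N4] at this
    have ndb : ¬ D.Adj d' b' := fun h => by
      have := (key 3 1 d' b' h3 h1).mp h; simp [N4] at this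
    have nzd : ¬ D.Adj z d' := fun h => by
      have := (key 2 3 z d' h2 h3).mp h; simp [N4] at this
    have n12 : b' ≠ z := fun h => by
      have := hinj (show φ 1 = φ 2 by rw [h1, h2, h]); simp at this
    have n13 : b' ≠ d' := fun h => by
      have := hinj (show φ 1 = φ 3 by rw [h1, h3, h]); simp at this
    have n23 : z ≠ d' := fun h => by
      have := hinj (show φ 2 = φ 3 by rw [h2, h3, h]); simp at this
    refine hc ![b', z, d'] ⟨?_, ?_⟩ ⟨i, ?_⟩
    · intro a b hab
      fin_cases a <;> fin_cases b <;> simp_all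
    · intro a b
      fin_cases a <;> fin_cases b <;>
        simp [V3sink, hbz, hdz, nzb, nbd, ndb, nzd, D.loopless]
    · intro u
      fin_cases u
      · have := hmono 1; rw [h1] at this; exact this
      · have := hmono 2; rw [h2] at this; exact this
      · have := hmono 3; rw [h3] at this; exact this
  · -- φ 2 = inr (w, u2)
    rcases h1 : φ 1 with b' | ⟨w1, u1⟩ <;> rw [h1] at hbc hba
    · -- φ 1 = inl b', so b' = w
      have hbw : b' = w := hbc
      rcases h3 : φ 3 with d' | ⟨w3, u3⟩ <;> rw [h3] at hdc
      · -- d' = w = b', contradicting injectivity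
        have hdw : d' = w := hdc
        have : φ 1 = φ 3 := by rw [h1, h3, hbw, hdw]
        have := hinj this; simp at this
      · -- w3 = w, so the arc (φ 1, φ 3) exists, contradiction
        have hw3 : w3 = w := hdc.1
        apply hbd
        rw [h1, h3, hD']
        exact (hbw.trans hw3.symm : b' = w3)
    · -- φ 1 = inr (w1, u1), w1 = w
      have hw1 : w1 = w := hbc.1
      rcases h3 : φ 3 with d' | ⟨w3, u3⟩ <;> rw [h3] at hdc
      · -- d' = w = w1, arc (φ 3, φ 1) exists, contradiction
        have hdw : d' = w := hdc
        apply hdb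
        rw [h3, h1, hD']
        exact (hdw.trans hw1.symm : d' = w1)
      · -- all inr; φ 0 must be inr too
        have hw3 : w3 = w := hdc.1
        rcases h0 : φ 0 with a' | ⟨w0, u0⟩ <;> rw [h0] at hba
        · exact hba.elim
        have hw0 : w0 = w := hba.1.symm.trans hw1
        have hφ : ∀ k : Fin 4, φ k = inr (w, ![u0, u1, u2, u3] k) := by
          intro k
          fin_cases k
          · show φ 0 = inr (w, u0); rw [h0, hw0]
          · show φ 1 = inr (w, u1); rw [h1, hw1]
          · show φ 2 = inr (w, u2); rw [h2]
          · show φ 3 = inr (w, u3); rw [h3, hw3]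
        have ginj : Function.Injective ![u0, u1, u2, u3] := by
          intro a b hab
          exact hinj (by rw [hφ a, hφ b, hab])
        have gsurj := Finite.injective_iff_surjective.mp ginj
        obtain ⟨k0, hk0⟩ := gsurj 0
        obtain ⟨k1, hk1⟩ := gsurj 1
        have hi0 : (0 : Fin 2) = i := by
          have := hmono k0; rw [hφ k0, hk0] at this; simpa using this
        have hi1 : (1 : Fin 2) = i := by
          have := hmono k1; rw [hφ k1, hk1] at this; simpa using this
        rw [← hi0] at hi1
        exact absurd hi1 (by decide)


lemma backward {V : Type*} (D : Digraph' V) (D' : Digraph' (V ⊕ (V × Fin 4)))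
    (hD' : ∀ x y, D'.Adj x y ↔ attachPlusRel D N4 x y)
    (c' : (V ⊕ (V × Fin 4)) → Fin 2) (hc' : IsFFreeColoring N4 D' c') :
    IsFFreeColoring V3sink D (fun v => c' (inl v)) := by
  rintro ψ ⟨hinj, hiso⟩ ⟨i, hmono⟩
  -- the gadget attached to ψ 0 is itself an induced copy of N4, so it is not monochromatic
  have hgadget : ¬ Monochromatic c' (fun u : Fin 4 => inr (ψ 0, u)) := by
    apply hc'
    refine ⟨fun a b hab => ?_, fun a b => ?_⟩
    · simpa using hab
    · rw [hD']
      exact ⟨fun h => h.2, fun h => ⟨rfl, h⟩⟩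
  -- hence some gadget vertex has color i
  have hex : ∃ g : Fin 4, c' (inr (ψ 0, g)) = i := by
    by_contra hno
    push_neg at hno
    exact hgadget ⟨1 - i, fun u =>
      (by decide : ∀ a j : Fin 2, a ≠ j → a = 1 - j) _ _ (hno u)⟩
  obtain ⟨g, hg⟩ := hex
  -- arcs and non-arcs of the V3 copy
  have hA01 : D.Adj (ψ 0) (ψ 1) := (hiso 0 1).mpr (Or.inl ⟨rfl, rfl⟩)
  have hA21 : D.Adj (ψ 2) (ψ 1) := (hiso 2 1).mpr (Or.inr ⟨rfl, rfl⟩)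
  have nA10 : ¬ D.Adj (ψ 1) (ψ 0) := fun h => by
    have := (hiso 1 0).mp h; simp [V3sink] at this
  have nA12 : ¬ D.Adj (ψ 1) (ψ 2) := fun h => by
    have := (hiso 1 2).mp h; simp [V3sink] at this
  have nA02 : ¬ D.Adj (ψ 0) (ψ 2) := fun h => by
    have := (hiso 0 2).mp h; simp [V3sink] at this
  have nA20 : ¬ D.Adj (ψ 2) (ψ 0) := fun h => by
    have := (hiso 2 0).mp h; simp [V3sink] at this
  have n01 : ψ 0 ≠ ψ 1 := fun h => by have := hinj h; simp at this
  have n02 : ψ 0 ≠ ψ 2 := fun h => by have := hinj h; simp at this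
  have n12 : ψ 1 ≠ ψ 2 := fun h => by have := hinj h; simp at this
  have n10 := n01.symm
  have n20 := n02.symm
  have n21 := n12.symm
  have hgl : ¬ N4.Adj g g := N4.loopless g
  -- build the monochromatic induced N4 copy in D'
  refine hc' ![inr (ψ 0, g), inl (ψ 0), inl (ψ 1), inl (ψ 2)] ⟨?_, ?_⟩ ⟨i, ?_⟩
  · intro a b hab
    fin_cases a <;> fin_cases b <;> simp_all
  · intro a b
    fin_cases a <;> fin_cases b <;>
      simp [hD', attachPlusRel, N4, hgl, hA01, hA21, nA10, nA12, nA02, nA20,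
        n01, n02, n12, n10, n20, n21, D.loopless] <;>
      exact (by decide : ∀ g : Fin 4,
        (g = 1 → ¬g = 0) ∧ (g = 1 → ¬g = 2) ∧ (g = 3 → ¬g = 2)) g
  · intro u
    fin_cases u
    · exact hg
    · exact hmono 0
    · exact hmono 1
    · exact hmono 2

/-- `D` admits a `V₃`-free `2`-coloring iff the digraph `D'`, obtained from `D` by attaching
to each vertex `v` a copy of `N₄` dominated by `v`, admits an `N₄`-free `2`-coloring;
moreover `D'` is acyclic iff `D` is. -/
theorem statement4 {V : Type*} [Fintype V] (D : Digraph' V)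
    (D' : Digraph' (V ⊕ (V × Fin 4)))
    (hD' : ∀ x y, D'.Adj x y ↔ attachPlusRel D N4 x y) :
    ((∃ c : V → Fin 2, IsFFreeColoring V3sink D c) ↔
        (∃ c : (V ⊕ (V × Fin 4)) → Fin 2, IsFFreeColoring N4 D' c)) ∧
      (D'.Acyclic ↔ D.Acyclic) := by
  refine ⟨⟨?_, ?_⟩, ?_, ?_⟩
  · rintro ⟨c, hc⟩
    exact ⟨_, forward D D' hD' c hc⟩
  · rintro ⟨c', hc'⟩
    exact ⟨_, backward D D' hD' c' hc'⟩
  · intro h v hv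
    exact h (Sum.inl v) (Relation.TransGen.lift Sum.inl
      (fun a b hab => (hD' _ _).mpr hab) v v hv)
  · intro h x hx
    have hp := trans_proj D D' hD' x x hx
    rcases x with v | p
    · exact h v hp
    · exact N4_acyclic p.2 hp.2
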